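/- Let N ≥ 2 and let r be an ultrametric on {1,…,N} with r(i,j) > 0 for i ≠ j, whose enumeration is length-minimal. Then for every n with 2 ≤ n ≤ N: r(n−1, n) = min_{1 ≤ k ≤ n−1} r(k, n). -/

import Mathlib

open Finset

/-- `r` is an ultrametric matrix on `{1,…,N}` (encoded by `Fin N`): nonnegative,
symmetric, vanishing on the diagonal, and satisfying the strong triangle inequality. -/
def IsUltramat {N : ℕ} (r : Fin N → Fin N → ℝ) : Prop :=
  (∀ i j, 0 ≤ r i j) ∧ (∀ i j, r i j = r j i) ∧ (∀ i, r i i = 0) ∧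
    (∀ i j k, r i k ≤ max (r i j) (r j k))

/-- `ell r n` is the total length `ℓ_n(r)` of the subtree spanned by the first `n`
points: half the minimum of `Σ_{i=1}^n r(i,σ(i))` over single-`n`-cycle permutations `σ`
of `{1,…,n}`, for `2 ≤ n ≤ N`; and `0` otherwise (in particular `ℓ_1(r) = 0`). -/
noncomputable def ell {N : ℕ} (r : Fin N → Fin N → ℝ) (n : ℕ) : ℝ :=
  if h : 2 ≤ n ∧ n ≤ N then
    (1 / 2) * sInf { x : ℝ | ∃ σ : Equiv.Perm (Fin n), σ.IsCycle ∧ σ.support = Finset.univ ∧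
      x = ∑ i : Fin n, r (Fin.castLE h.2 i) (Fin.castLE h.2 (σ i)) }
  else 0

/-- The enumeration of the points of `r` is length-minimal: for every permutation `τ` of
`{1,…,N}`, the vector `(ℓ_1(r),…,ℓ_N(r))` is lexicographically at most
`(ℓ_1(r^τ),…,ℓ_N(r^τ))`, where `r^τ(i,j) = r(τ(i),τ(j))`. -/
def LengthMinimal {N : ℕ} (r : Fin N → Fin N → ℝ) : Prop :=
  ∀ τ : Equiv.Perm (Fin N),
    (∀ n, n ≤ N → ell r n = ell (fun i j => r (τ i) (τ j)) n) ∨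
    (∃ n, n ≤ N ∧ (∀ m, m < n → ell r m = ell (fun i j => r (τ i) (τ j)) m) ∧
      ell r n < ell (fun i j => r (τ i) (τ j)) n)

namespace LMAux

variable {N : ℕ} (r : Fin N → Fin N → ℝ)

/-- Set of costs of Hamiltonian-cycle tours on `S`. -/
def tourSet (S : Finset (Fin N)) : Set ℝ :=
  {x | ∃ σ : Equiv.Perm (Fin N), σ.IsCycle ∧ σ.support = S ∧ x = ∑ z ∈ S, r z (σ z)}

noncomputable def tourMin (S : Finset (Fin N)) : ℝ := sInf (tourSet r S)

lemma tourSet_finite (S : Finset (Fin N)) : (tourSet r S).Finite := by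
  apply Set.Finite.subset
    (Finset.finite_toSet ((Finset.univ : Finset (Equiv.Perm (Fin N))).image
      (fun σ => ∑ z ∈ S, r z (σ z))))
  rintro x ⟨σ, -, -, rfl⟩
  simp only [Finset.coe_image, Set.mem_image, Finset.mem_coe]
  exact ⟨σ, by simp, rfl⟩

lemma tourSet_nonempty {S : Finset (Fin N)} (h2 : 2 ≤ S.card) : (tourSet r S).Nonempty := by
  obtain ⟨f, hf, hsub⟩ := S.exists_cycleOn
  have hnt : S.Nontrivial := Finset.one_lt_card_iff_nontrivial.mp (by omega)
  have hsupp : f.support = S := by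
    apply Finset.Subset.antisymm hsub
    intro z hz
    exact Equiv.Perm.mem_support.mpr (hf.apply_ne hnt hz)
  have hcyc : f.IsCycle := by
    obtain ⟨a, ha⟩ := hnt.nonempty
    refine ⟨a, hf.apply_ne hnt ha, fun y hy => ?_⟩
    have hyS : y ∈ S := by rw [← hsupp] at *; exact Equiv.Perm.mem_support.mpr hy
    exact hf.2 ha hyS
  exact ⟨_, f, hcyc, hsupp, rfl⟩

lemma tourMin_mem {S : Finset (Fin N)} (h2 : 2 ≤ S.card) : tourMin r S ∈ tourSet r S :=
  (tourSet_nonempty r h2).csInf_mem (tourSet_finite r S)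

lemma tourMin_le {S : Finset (Fin N)} {x : ℝ} (hx : x ∈ tourSet r S) : tourMin r S ≤ x :=
  csInf_le (tourSet_finite r S).bddBelow hx

lemma tourMin_pair (hsym : ∀ i j, r i j = r j i) {z y : Fin N} (hzy : z ≠ y) :
    tourMin r {z, y} = 2 * r z y := by
  have hset : tourSet r {z, y} = {2 * r z y} := by
    ext x; constructor
    · rintro ⟨σ, hcyc, hsupp, rfl⟩
      have hz : z ∈ σ.support := by rw [hsupp]; simp
      have hy' : y ∈ σ.support := by rw [hsupp]; simp
      have hσz : σ z = y := by
        have h1 : σ z ∈ ({z, y} : Finset (Fin N)) := by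
          rw [← hsupp]; exact Equiv.Perm.apply_mem_support.mpr hz
        have h2 : σ z ≠ z := Equiv.Perm.mem_support.mp hz
        simpa [h2] using h1
      have hσy : σ y = z := by
        have h1 : σ y ∈ ({z, y} : Finset (Fin N)) := by
          rw [← hsupp]; exact Equiv.Perm.apply_mem_support.mpr hy'
        have h2 : σ y ≠ y := Equiv.Perm.mem_support.mp hy'
        simpa [h2] using h1
      rw [Finset.sum_pair hzy, hσz, hσy, hsym y z]
      simp only [Set.mem_singleton_iff]; ring
    · rintro rfl
      refine ⟨Equiv.swap z y, Equiv.Perm.isCycle_swap hzy, Equiv.Perm.support_swap hzy, ?_⟩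
      rw [Finset.sum_pair hzy, Equiv.swap_apply_left, Equiv.swap_apply_right, hsym y z]
      ring
  rw [tourMin, hset, csInf_singleton]

lemma tourMin_delete {S' : Finset (Fin N)} {x : Fin N} (hx : x ∈ S') (h3 : 3 ≤ S'.card) :
    ∃ p ∈ S', ∃ q ∈ S', p ≠ x ∧ q ≠ x ∧ p ≠ q ∧
      tourMin r (S'.erase x) ≤ tourMin r S' - r p x - r x q + r p q := by
  obtain ⟨σ, hcyc, hsupp, hsum⟩ := tourMin_mem r (S := S') (by omega)
  have hxsupp : x ∈ σ.support := by rw [hsupp]; exact hx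
  have hσx : σ x ≠ x := Equiv.Perm.mem_support.mp hxsupp
  have hqS : σ x ∈ S' := by rw [← hsupp]; exact Equiv.Perm.apply_mem_support.mpr hxsupp
  have hpsupp : σ⁻¹ x ∈ σ.support := by
    rw [← Equiv.Perm.support_inv]; exact Equiv.Perm.apply_mem_support.mpr
      (by rw [Equiv.Perm.support_inv]; exact hxsupp)
  have hpS : σ⁻¹ x ∈ S' := by rw [← hsupp]; exact hpsupp
  have hpx : σ⁻¹ x ≠ x := by
    intro h
    apply hσx
    conv_lhs => rw [← h]
    exact σ.apply_symm_apply x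
  -- σ (σ x) ≠ x
  have hffx : σ (σ x) ≠ x := by
    intro hσq
    have hsubset : S' ⊆ {x, σ x} := by
      intro y hy
      have hy' : σ y ≠ y := Equiv.Perm.mem_support.mp (by rw [hsupp]; exact hy)
      obtain ⟨i, hi⟩ := hcyc.sameCycle hσx hy'
      rcases Equiv.Perm.zpow_apply_eq_of_apply_apply_eq_self hσq i with h1 | h1 <;>
        · rw [h1] at hi
          simp [← hi, Finset.mem_insert]
    have h1 := Finset.card_le_card hsubset
    have h2 : ({x, σ x} : Finset (Fin N)).card ≤ 2 := Finset.card_insert_le _ _ |>.trans (by simp)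
    omega
  have hpq : σ⁻¹ x ≠ σ x := by
    intro h
    apply hffx
    conv_lhs => rw [← h]
    exact σ.apply_symm_apply x
  set σ' := Equiv.swap x (σ x) * σ with hσ'
  have hcyc' : σ'.IsCycle := hcyc.swap_mul hσx hffx
  have hσ'x : σ' x = x := by
    simp only [hσ', Equiv.Perm.mul_apply]
    exact Equiv.swap_apply_right _ _
  have happ : ∀ z, z ≠ x → z ≠ σ⁻¹ x → σ' z = σ z := by
    intro z hzx hzp
    simp only [hσ', Equiv.Perm.mul_apply]
    apply Equiv.swap_apply_of_ne_of_ne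
    · intro h; exact hzp (by rw [← h]; simp)
    · intro h; exact hzx (σ.injective h)
  have happ_p : σ' (σ⁻¹ x) = σ x := by
    simp only [hσ', Equiv.Perm.mul_apply, Equiv.Perm.coe_inv, Equiv.apply_symm_apply]
    exact Equiv.swap_apply_left _ _
  have hsupp' : σ'.support = S'.erase x := by
    ext z
    rw [Equiv.Perm.mem_support, Finset.mem_erase]
    constructor
    · intro hz
      by_cases hzx : z = x
      · exact absurd (hzx ▸ hσ'x) (hzx ▸ hz)
      refine ⟨hzx, ?_⟩
      by_cases hzp : z = σ⁻¹ x
      · exact hzp ▸ hpS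
      · by_contra hzS
        have h0 : σ z = z := by
          have : z ∉ σ.support := by rw [hsupp]; exact hzS
          exact Equiv.Perm.notMem_support.mp this
        exact hz (by rw [happ z hzx hzp, h0])
    · rintro ⟨hzx, hzS⟩
      by_cases hzp : z = σ⁻¹ x
      · subst hzp; rw [happ_p]; exact fun h => hpq h.symm
      · rw [happ z hzx hzp]
        exact Equiv.Perm.mem_support.mp (by rw [hsupp]; exact hzS)
  have hpmem : σ⁻¹ x ∈ S'.erase x := Finset.mem_erase.mpr ⟨hpx, hpS⟩
  have hsum' : ∑ z ∈ S'.erase x, r z (σ' z)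
      = (∑ z ∈ S', r z (σ z)) - r (σ⁻¹ x) x - r x (σ x) + r (σ⁻¹ x) (σ x) := by
    have h1 : ∑ z ∈ S'.erase x, r z (σ' z)
        = (∑ z ∈ (S'.erase x).erase (σ⁻¹ x), r z (σ z)) + r (σ⁻¹ x) (σ x) := by
      rw [← Finset.sum_erase_add _ _ hpmem, happ_p]
      congr 1
      apply Finset.sum_congr rfl
      intro z hz
      have h2 := Finset.mem_erase.mp hz
      have h3 := Finset.mem_erase.mp h2.2
      rw [happ z h3.1 h2.1]
    have h2 : ∑ z ∈ S', r z (σ z)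
        = ((∑ z ∈ (S'.erase x).erase (σ⁻¹ x), r z (σ z)) + r (σ⁻¹ x) x) + r x (σ x) := by
      rw [← Finset.sum_erase_add S' _ hx, ← Finset.sum_erase_add (S'.erase x) _ hpmem]
      rw [Equiv.Perm.coe_inv, Equiv.apply_symm_apply]
    rw [h1, h2]; ring
  refine ⟨σ⁻¹ x, hpS, σ x, hqS, hpx, hσx, hpq, ?_⟩
  have hle := tourMin_le r ⟨σ', hcyc', hsupp', rfl⟩
  rw [hsum'] at hle
  rw [← hsum] at hle
  linarith

lemma tourMin_insert {S : Finset (Fin N)} {b p : Fin N} (hb : b ∉ S)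
    (σ : Equiv.Perm (Fin N)) (hcyc : σ.IsCycle) (hsupp : σ.support = S) (hp : p ∈ S) :
    tourMin r (insert b S) ≤ (∑ z ∈ S, r z (σ z)) + r p b + r b (σ p) - r p (σ p) := by
  classical
  have hpsupp : p ∈ σ.support := by rw [hsupp]; exact hp
  have hσp : σ p ≠ p := Equiv.Perm.mem_support.mp hpsupp
  have hqS : σ p ∈ S := by rw [← hsupp]; exact Equiv.Perm.apply_mem_support.mpr hpsupp
  have hbfix : σ b = b := Equiv.Perm.notMem_support.mp (by rw [hsupp]; exact hb)
  have hqb : σ p ≠ b := fun h => hb (h ▸ hqS)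
  have hpb : p ≠ b := fun h => hb (h ▸ hp)
  set σ' := σ * Equiv.swap p b with hσ'
  have hσ'p : σ' p = b := by
    simp only [hσ', Equiv.Perm.mul_apply, Equiv.swap_apply_left]
    exact hbfix
  have hσ'b : σ' b = σ p := by
    simp only [hσ', Equiv.Perm.mul_apply, Equiv.swap_apply_right]
  have happ : ∀ z, z ≠ p → z ≠ b → σ' z = σ z := by
    intro z h1 h2
    simp only [hσ', Equiv.Perm.mul_apply, Equiv.swap_apply_of_ne_of_ne h1 h2]
  have aux : ∀ m : ℕ, (∀ i : ℕ, i < m → (σ ^ i) (σ p) ≠ p) → (σ' ^ (m + 1)) b = (σ ^ m) (σ p) := by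
    intro m
    induction m with
    | zero => intro _; simpa using hσ'b
    | succ m ih =>
      intro hm
      have h1 : (σ' ^ (m + 1 + 1)) b = σ' ((σ' ^ (m + 1)) b) := by
        rw [pow_succ' σ' (m+1)]; rfl
      rw [h1, ih (fun i hi => hm i (Nat.lt_succ_of_lt hi))]
      have hmq : (σ ^ m) (σ p) ≠ p := hm m (Nat.lt_succ_self m)
      have hmqS : (σ ^ m) (σ p) ∈ S := by
        rw [← hsupp]
        exact Equiv.Perm.pow_apply_mem_support.mpr (Equiv.Perm.apply_mem_support.mpr hpsupp)
      have hmqb : (σ ^ m) (σ p) ≠ b := fun h => hb (h ▸ hmqS)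
      rw [happ _ hmq hmqb, ← Equiv.Perm.mul_apply, ← pow_succ']
  have hcyc' : σ'.IsCycle := by
    refine ⟨b, by rw [hσ'b]; exact hqb, ?_⟩
    intro y hy
    by_cases hyb : y = b
    · subst hyb; exact Equiv.Perm.SameCycle.refl _ _
    have hyS : y ∈ S := by
      by_contra hyS
      have h1 : y ≠ p := fun h => hyS (h ▸ hp)
      apply hy
      rw [happ y h1 hyb]
      exact Equiv.Perm.notMem_support.mp (by rw [hsupp]; exact hyS)
    have hσy : σ y ≠ y := Equiv.Perm.mem_support.mp (by rw [hsupp]; exact hyS)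
    have hσq : σ (σ p) ≠ σ p := Equiv.Perm.mem_support.mp (by rw [hsupp]; exact hqS)
    obtain ⟨m0, hm0⟩ := hcyc.exists_pow_eq hσq hσy
    have hex : ∃ m, (σ ^ m) (σ p) = y := ⟨m0, hm0⟩
    have hmy : (σ ^ Nat.find hex) (σ p) = y := Nat.find_spec hex
    set m := Nat.find hex with hmdef
    have hminm : ∀ i < m, (σ ^ i) (σ p) ≠ y := fun i hi => Nat.find_min hex hi
    have hnp : ∀ i < m, (σ ^ i) (σ p) ≠ p := by
      intro i hi hip
      have hper1 : (σ ^ (i + 1)) (σ p) = σ p := by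
        rw [pow_succ' σ i, Equiv.Perm.mul_apply, hip]
      have hperiod : ∀ d : ℕ, (σ ^ ((i + 1) * d)) (σ p) = σ p := by
        intro d
        induction d with
        | zero => simp
        | succ d ihd =>
          rw [Nat.mul_succ, pow_add, Equiv.Perm.mul_apply, hper1, ihd]
      have hmod : (σ ^ (m % (i + 1))) (σ p) = y := by
        conv at hmy => rw [← Nat.mod_add_div m (i + 1)]
        rw [pow_add, Equiv.Perm.mul_apply, hperiod] at hmy
        exact hmy
      have hlt : m % (i + 1) < m := by
        have := Nat.mod_lt m (show 0 < i + 1 by omega)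
        omega
      exact hminm _ hlt hmod
    refine ⟨((m : ℤ) + 1), ?_⟩
    have : ((m : ℤ) + 1) = ((m + 1 : ℕ) : ℤ) := by push_cast; ring
    rw [this, zpow_natCast]
    exact (aux m hnp).trans hmy
  have hsupp' : σ'.support = insert b S := by
    ext z
    rw [Equiv.Perm.mem_support, Finset.mem_insert]
    constructor
    · intro hz
      by_cases h1 : z = b
      · exact Or.inl h1
      right
      by_cases h2 : z = p
      · exact h2 ▸ hp
      by_contra hzS
      apply hz
      rw [happ z h2 h1]
      exact Equiv.Perm.notMem_support.mp (by rw [hsupp]; exact hzS)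
    · rintro (rfl | hzS)
      · rw [hσ'b]; exact hqb
      · by_cases h2 : z = p
        · subst h2; rw [hσ'p]; exact fun h => hpb h.symm
        · have hzb : z ≠ b := fun h => hb (h ▸ hzS)
          rw [happ z h2 hzb]
          exact Equiv.Perm.mem_support.mp (by rw [hsupp]; exact hzS)
  have hcost : ∑ z ∈ insert b S, r z (σ' z)
      = (∑ z ∈ S, r z (σ z)) + r p b + r b (σ p) - r p (σ p) := by
    rw [Finset.sum_insert hb, hσ'b]
    have h1 : ∑ z ∈ S, r z (σ' z) = (∑ z ∈ S.erase p, r z (σ z)) + r p b := by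
      rw [← Finset.sum_erase_add _ _ hp, hσ'p]
      congr 1
      apply Finset.sum_congr rfl
      intro z hz
      rw [happ z (Finset.ne_of_mem_erase hz)
        (fun h => hb (h ▸ Finset.mem_of_mem_erase hz))]
    have h2 : (∑ z ∈ S.erase p, r z (σ z)) = (∑ z ∈ S, r z (σ z)) - r p (σ p) := by
      have := Finset.sum_erase_add S (fun z => r z (σ z)) hp
      linarith
    rw [h1, h2]; ring
  have hle := tourMin_le r ⟨σ', hcyc', hsupp', rfl⟩
  rw [hcost] at hle
  linarith
lemma exists_cross {S : Finset (Fin N)} (σ : Equiv.Perm (Fin N)) (hcyc : σ.IsCycle)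
    (hsupp : σ.support = S) (P : Fin N → Prop) {j y : Fin N}
    (hj : j ∈ S) (hPj : P j) (hy : y ∈ S) (hPy : ¬ P y) :
    ∃ p ∈ S, P p ∧ ¬ P (σ p) := by
  by_contra hcon
  push_neg at hcon
  have key : ∀ m : ℕ, (σ ^ m) j ∈ S ∧ P ((σ ^ m) j) := by
    intro m
    induction m with
    | zero => simpa using ⟨hj, hPj⟩
    | succ m ih =>
      have h1 : (σ ^ (m + 1)) j = σ ((σ ^ m) j) := by rw [pow_succ' σ m]; rfl
      have hmem : σ ((σ ^ m) j) ∈ S := by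
        rw [← hsupp]
        exact Equiv.Perm.apply_mem_support.mpr (by rw [hsupp]; exact ih.1)
      rw [h1]
      exact ⟨hmem, hcon _ ih.1 ih.2⟩
  have hσj : σ j ≠ j := Equiv.Perm.mem_support.mp (by rw [hsupp]; exact hj)
  have hσy : σ y ≠ y := Equiv.Perm.mem_support.mp (by rw [hsupp]; exact hy)
  obtain ⟨m, hm⟩ := hcyc.exists_pow_eq hσj hσy
  exact hPy (hm ▸ (key m).2)

lemma exists_maxedge (hult : IsUltramat r) {S : Finset (Fin N)} (σ : Equiv.Perm (Fin N))
    (hcyc : σ.IsCycle) (hsupp : σ.support = S) {u v : Fin N} (hu : u ∈ S) (hv : v ∈ S) :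
    ∃ p ∈ S, r u v ≤ r p (σ p) := by
  obtain ⟨h0, hsym, hrefl, htri⟩ := hult
  by_cases huv : u = v
  · exact ⟨u, hu, by rw [huv, hrefl]; exact h0 _ _⟩
  by_contra hcon
  push_neg at hcon
  have key : ∀ m : ℕ, (σ ^ m) u ∈ S ∧ ((σ ^ m) u = u ∨ r u ((σ ^ m) u) < r u v) := by
    intro m
    induction m with
    | zero => simpa using hu
    | succ m ih =>
      have h1 : (σ ^ (m + 1)) u = σ ((σ ^ m) u) := by rw [pow_succ' σ m]; rfl
      have hmem : σ ((σ ^ m) u) ∈ S := by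
        rw [← hsupp]
        exact Equiv.Perm.apply_mem_support.mpr (by rw [hsupp]; exact ih.1)
      rw [h1]
      refine ⟨hmem, Or.inr ?_⟩
      rcases ih.2 with h2 | h2
      · rw [h2]; exact hcon u hu
      · calc r u (σ ((σ ^ m) u)) ≤ max (r u ((σ ^ m) u)) (r ((σ ^ m) u) (σ ((σ ^ m) u))) :=
              htri _ _ _
          _ < r u v := max_lt h2 (hcon _ ih.1)
  have hσu : σ u ≠ u := Equiv.Perm.mem_support.mp (by rw [hsupp]; exact hu)
  have hσv : σ v ≠ v := Equiv.Perm.mem_support.mp (by rw [hsupp]; exact hv)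
  obtain ⟨m, hm⟩ := hcyc.exists_pow_eq hσu hσv
  rcases (key m).2 with h1 | h1
  · exact huv ((hm ▸ h1 : v = u)).symm
  · rw [hm] at h1; exact lt_irrefl _ h1

/-- Insertion of `b` next to the "near set", when some point is farther from `b`
than the nearest point `j`. -/
lemma LA (hult : IsUltramat r) {S : Finset (Fin N)} (h2 : 2 ≤ S.card) {b j y : Fin N}
    (hb : b ∉ S) (hj : j ∈ S) (hjmin : ∀ z ∈ S, r j b ≤ r z b)
    (hy : y ∈ S) (hyy : r j b < r y b) :
    tourMin r (insert b S) ≤ tourMin r S + r j b := by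
  obtain ⟨h0, hsym, hrefl, htri⟩ := hult
  obtain ⟨σ, hcyc, hsupp, hsum⟩ := tourMin_mem r h2
  obtain ⟨p, hp, hPp, hPq⟩ := exists_cross σ hcyc hsupp (fun z => r z b = r j b) hj rfl hy
    (by intro h; rw [h] at hyy; exact lt_irrefl _ hyy)
  have hqS : σ p ∈ S := by
    rw [← hsupp]
    exact Equiv.Perm.apply_mem_support.mpr (by rw [hsupp]; exact hp)
  have hql : r j b < r (σ p) b := lt_of_le_of_ne (hjmin _ hqS) (fun h => hPq h.symm)
  -- r (σ p) b ≤ max (r (σ p) p) (r p b) and r p b = r j b < r (σ p) b forces r p q ≥ r (σ p) b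
  have hpq_ge : r (σ p) b ≤ r p (σ p) := by
    have h1 := htri (σ p) p b
    rw [hPp] at h1
    rcases max_cases (r (σ p) p) (r j b) with ⟨hm, -⟩ | ⟨hm, -⟩
    · rw [hm] at h1; rw [hsym] at h1 ⊢; exact h1.trans (le_of_eq (hsym _ _))
    · rw [hm] at h1; exact absurd (lt_of_lt_of_le hql h1) (lt_irrefl _)
  have hbq : r b (σ p) ≤ r p (σ p) := by
    have h1 := htri b p (σ p)
    rcases max_cases (r b p) (r p (σ p)) with ⟨hm, -⟩ | ⟨hm, -⟩
    · rw [hm] at h1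
      calc r b (σ p) ≤ r b p := h1
        _ = r j b := by rw [hsym]; exact hPp
        _ ≤ r (σ p) b := le_of_lt hql
        _ ≤ r p (σ p) := hpq_ge
    · rw [hm] at h1; exact h1
  have hins := tourMin_insert r hb σ hcyc hsupp hp
  rw [← hsum] at hins
  have : r p b = r j b := hPp
  linarith

/-- Insertion of `b` into a maximal edge. -/
lemma LB (hult : IsUltramat r) {S : Finset (Fin N)} (h2 : 2 ≤ S.card) {b u v : Fin N}
    (hb : b ∉ S) {T : ℝ} (hT : ∀ z ∈ S, r z b ≤ T) (hu : u ∈ S) (hv : v ∈ S) :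
    tourMin r (insert b S) ≤ tourMin r S + T + T - r u v := by
  obtain ⟨h0, hsym, hrefl, htri⟩ := hult
  obtain ⟨σ, hcyc, hsupp, hsum⟩ := tourMin_mem r h2
  obtain ⟨p, hp, hedge⟩ := exists_maxedge r ⟨h0, hsym, hrefl, htri⟩ σ hcyc hsupp hu hv
  have hqS : σ p ∈ S := by
    rw [← hsupp]
    exact Equiv.Perm.apply_mem_support.mpr (by rw [hsupp]; exact hp)
  have hins := tourMin_insert r hb σ hcyc hsupp hp
  rw [← hsum] at hins
  have h1 : r p b ≤ T := hT p hp
  have h2' : r b (σ p) ≤ T := by rw [hsym]; exact hT _ hqS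
  linarith

/-- Deletion, crude bound. -/
lemma LCp (hult : IsUltramat r) {S' : Finset (Fin N)} {x : Fin N}
    (hx : x ∈ S') (h3 : 3 ≤ S'.card) {t : ℝ} (ht : ∀ z ∈ S', z ≠ x → t ≤ r x z) :
    tourMin r (S'.erase x) + t ≤ tourMin r S' := by
  obtain ⟨h0, hsym, hrefl, htri⟩ := hult
  obtain ⟨p, hp, q, hq, hpx, hqx, hpq, hdel⟩ := tourMin_delete r hx h3
  have h1 : t ≤ r p x := by rw [hsym]; exact ht p hp hpx
  have h2 : t ≤ r x q := ht q hq hqx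
  have h3' : r p q ≤ max (r p x) (r x q) := htri _ _ _
  rcases max_cases (r p x) (r x q) with ⟨hm, -⟩ | ⟨hm, -⟩ <;> rw [hm] at h3' <;> linarith

/-- Deletion, with diameter-improved bound. -/
lemma LC (hult : IsUltramat r) {S' : Finset (Fin N)} {x : Fin N}
    (hx : x ∈ S') (h3 : 3 ≤ S'.card) {t D : ℝ} (ht : ∀ z ∈ S', z ≠ x → t ≤ r x z)
    (hD : ∀ z ∈ S', ∀ z' ∈ S', z ≠ x → z' ≠ x → r z z' ≤ D) :
    tourMin r (S'.erase x) + t + t - D ≤ tourMin r S' := by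
  obtain ⟨h0, hsym, hrefl, htri⟩ := hult
  obtain ⟨p, hp, q, hq, hpx, hqx, hpq, hdel⟩ := tourMin_delete r hx h3
  have h1 : t ≤ r p x := by rw [hsym]; exact ht p hp hpx
  have h2 : t ≤ r x q := ht q hq hqx
  have h3' : r p q ≤ D := hD p hp q hq hpx hqx
  linarith

lemma bridge (r : Fin N → Fin N → ℝ) {k : ℕ} (hk2 : 2 ≤ k)
    (e : Fin k → Fin N) (he : Function.Injective e) :
    {x : ℝ | ∃ σ : Equiv.Perm (Fin k), σ.IsCycle ∧ σ.support = Finset.univ ∧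
      x = ∑ i : Fin k, r (e i) (e (σ i))} = tourSet r (Finset.univ.image e) := by
  classical
  have hne : Nonempty (Fin k) := ⟨⟨0, by omega⟩⟩
  have hmem : ∀ i, e i ∈ Finset.univ.image e :=
    fun i => Finset.mem_image.mpr ⟨i, Finset.mem_univ i, rfl⟩
  set f : Fin k ≃ {z // z ∈ Finset.univ.image e} := Equiv.ofBijective
    (fun i => (⟨e i, hmem i⟩ : {z // z ∈ Finset.univ.image e}))
    (by
      constructor
      · intro i j hij
        exact he (congrArg Subtype.val hij)
      · rintro ⟨z, hz⟩
        obtain ⟨i, -, rfl⟩ := Finset.mem_image.mp hz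
        exact ⟨i, rfl⟩) with hf
  have hfe : ∀ i, (f i : Fin N) = e i := fun i => rfl
  ext x
  constructor
  · rintro ⟨σ, hcyc, hsupp, rfl⟩
    refine ⟨σ.extendDomain f, hcyc.extendDomain f, ?_, ?_⟩
    · rw [Equiv.Perm.support_extend_domain, hsupp]
      ext z
      simp only [Finset.mem_map, Finset.mem_univ, true_and, Finset.mem_image]
      constructor
      · rintro ⟨i, rfl⟩
        exact ⟨i, rfl⟩
      · rintro ⟨i, rfl⟩
        exact ⟨i, rfl⟩
    · rw [Finset.sum_image (fun i _ j _ h => he h)]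
      apply Finset.sum_congr rfl
      intro i _
      have hED : σ.extendDomain f (e i) = e (σ i) := by
        have h1 := Equiv.Perm.extendDomain_apply_subtype σ f (hmem i)
        have h2 : f.symm ⟨e i, hmem i⟩ = i := by
          rw [Equiv.symm_apply_eq]; rfl
        rw [h1, h2]; rfl
      rw [hED]
  · rintro ⟨τ, hcyc, hsupp, rfl⟩
    have hτmem : ∀ z : Fin N, z ∈ Finset.univ.image e ↔ τ z ∈ Finset.univ.image e := by
      intro z
      rw [← hsupp]
      exact Equiv.Perm.apply_mem_support.symm
    set σ : Equiv.Perm (Fin k) := (Equiv.permCongr f).symm (τ.subtypePerm (fun z => (hτmem z).symm)) with hσdef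
    have hkey : ∀ i, e (σ i) = τ (e i) := by
      intro i
      have h1 : σ i = f.symm (τ.subtypePerm (fun z => (hτmem z).symm) (f i)) := rfl
      calc e (σ i) = ((f (σ i) : Fin N)) := rfl
        _ = ((τ.subtypePerm (fun z => (hτmem z).symm) (f i) : Fin N)) := by rw [h1, Equiv.apply_symm_apply]
        _ = τ (e i) := rfl
    have hpow : ∀ (m : ℕ) (i : Fin k), e ((σ ^ m) i) = (τ ^ m) (e i) := by
      intro m
      induction m with
      | zero => simp
      | succ m ih =>
        intro i
        have h1 : (σ ^ (m + 1)) i = σ ((σ ^ m) i) := by rw [pow_succ' σ m]; rfl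
        have h2 : (τ ^ (m + 1)) (e i) = τ ((τ ^ m) (e i)) := by rw [pow_succ' τ m]; rfl
        rw [h1, h2, hkey, ih]
    have hzpow : ∀ (m : ℤ) (i : Fin k), e ((σ ^ m) i) = (τ ^ m) (e i) := by
      intro m i
      obtain ⟨m', rfl | rfl⟩ := m.eq_nat_or_neg
      · rw [zpow_natCast, zpow_natCast]; exact hpow m' i
      · apply (Equiv.injective (τ ^ (m' : ℕ)))
        have h1 : (τ ^ (m' : ℕ)) (e ((σ ^ (-(m' : ℤ))) i)) = e i := by
          rw [← hpow]
          congr 1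
          have : (σ ^ (m' : ℕ)) ((σ ^ (-(m' : ℤ))) i) = ((σ ^ ((m' : ℤ))) * (σ ^ (-(m' : ℤ)))) i := by
            rw [← zpow_natCast]; rfl
          rw [this, ← zpow_add]
          simp
        have h2 : (τ ^ (m' : ℕ)) ((τ ^ (-(m' : ℤ))) (e i)) = e i := by
          have : (τ ^ (m' : ℕ)) ((τ ^ (-(m' : ℤ))) (e i)) = ((τ ^ ((m' : ℤ))) * (τ ^ (-(m' : ℤ)))) (e i) := by
            rw [← zpow_natCast]; rfl
          rw [this, ← zpow_add]
          simp
        rw [h1, h2]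
    have hsne : ∀ i : Fin k, σ i ≠ i := by
      intro i hcontra
      have h1 : τ (e i) = e i := by rw [← hkey, hcontra]
      have h2 : e i ∈ τ.support := by rw [hsupp]; exact hmem i
      exact (Equiv.Perm.mem_support.mp h2) h1
    have hsupp2 : σ.support = Finset.univ := by
      ext i
      simp [Equiv.Perm.mem_support, hsne i]
    refine ⟨σ, ?_, hsupp2, ?_⟩
    · obtain ⟨i0⟩ := hne
      refine ⟨i0, hsne i0, ?_⟩
      intro y _
      have h1 : τ (e i0) ≠ e i0 := Equiv.Perm.mem_support.mp (by rw [hsupp]; exact hmem i0)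
      have h2 : τ (e y) ≠ e y := Equiv.Perm.mem_support.mp (by rw [hsupp]; exact hmem y)
      obtain ⟨m, hm⟩ := hcyc.sameCycle h1 h2
      exact ⟨m, he (by rw [hzpow]; exact hm)⟩
    · rw [Finset.sum_image (fun i _ j _ h => he h)]
      apply Finset.sum_congr rfl
      intro i _
      rw [hkey]

def Sk (N k : ℕ) : Finset (Fin N) := Finset.univ.filter (fun z => (z : ℕ) < k)

lemma mem_Sk {k : ℕ} {z : Fin N} : z ∈ Sk N k ↔ (z : ℕ) < k := by simp [Sk]

lemma Sk_eq_image {k : ℕ} (hkN : k ≤ N) :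
    Sk N k = Finset.univ.image (Fin.castLE hkN) := by
  ext z
  simp only [mem_Sk, Finset.mem_image, Finset.mem_univ, true_and]
  constructor
  · intro h; exact ⟨⟨(z : ℕ), h⟩, by ext; rfl⟩
  · rintro ⟨i, rfl⟩; exact i.isLt

lemma Sk_card {k : ℕ} (hkN : k ≤ N) : (Sk N k).card = k := by
  rw [Sk_eq_image hkN, Finset.card_image_of_injective _ (Fin.castLE_injective hkN),
    Finset.card_univ, Fintype.card_fin]

/-- `ell` of a relabelled matrix in terms of `tourMin`. -/
lemma ell_eq_general (r : Fin N → Fin N → ℝ) {k : ℕ} (hk2 : 2 ≤ k) (hkN : k ≤ N)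
    (g : Fin N → Fin N) (hg : Function.Injective g) :
    ell (fun i j => r (g i) (g j)) k = (1 / 2) * tourMin r ((Sk N k).image g) := by
  rw [ell, dif_pos (⟨hk2, hkN⟩ : 2 ≤ k ∧ k ≤ N)]
  congr 1
  rw [tourMin]
  apply congrArg sInf
  have hinj : Function.Injective (fun i => g (Fin.castLE hkN i)) :=
    fun i j h => Fin.castLE_injective hkN (hg h)
  have hb := bridge r hk2 (fun i => g (Fin.castLE hkN i)) hinj
  have himg : Finset.univ.image (fun i => g (Fin.castLE hkN i)) = (Sk N k).image g := by
    rw [Sk_eq_image hkN, Finset.image_image]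
    rfl
  rw [himg] at hb
  exact hb

lemma ell_eq (r : Fin N → Fin N → ℝ) {k : ℕ} (hk2 : 2 ≤ k) (hkN : k ≤ N) :
    ell r k = (1 / 2) * tourMin r (Sk N k) := by
  have h := ell_eq_general r hk2 hkN id Function.injective_id
  rw [Finset.image_id] at h
  exact h

/-- The key greedy inequality extracted from length-minimality. -/
lemma greedy (r : Fin N → Fin N → ℝ) (hmin : LengthMinimal r) {w : ℕ}
    (hw1 : 1 ≤ w) (hwN : w + 1 ≤ N) {b : Fin N} (hb : w < (b : ℕ)) :
    tourMin r (Sk N (w + 1)) ≤ tourMin r (insert b (Sk N w)) := by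
  set xw : Fin N := ⟨w, by omega⟩ with hxw
  set τ := Equiv.swap xw b with hτ
  have hxwb : xw ≠ b := fun h => by
    have := congrArg Fin.val h
    simp only [hxw] at this
    omega
  have hτfix : ∀ z : Fin N, (z : ℕ) < w → τ z = z := by
    intro z hz
    apply Equiv.swap_apply_of_ne_of_ne
    · intro h; have := congrArg Fin.val h; simp only [hxw] at this; omega
    · intro h; have := congrArg Fin.val h; omega
  have hell_eq : ∀ m, m < w + 1 → ell r m = ell (fun i j => r (τ i) (τ j)) m := by
    intro m hm
    by_cases hm2 : 2 ≤ m
    · have hmN : m ≤ N := by omega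
      rw [ell, ell, dif_pos (⟨hm2, hmN⟩ : 2 ≤ m ∧ m ≤ N),
        dif_pos (⟨hm2, hmN⟩ : 2 ≤ m ∧ m ≤ N)]
      congr 1
      apply congrArg sInf
      have hfix : ∀ i : Fin m, τ (Fin.castLE hmN i) = Fin.castLE hmN i := by
        intro i
        exact hτfix _ (by simpa using lt_of_lt_of_le i.isLt (by omega))
      ext x
      constructor <;> rintro ⟨σ, h1, h2, rfl⟩ <;> exact ⟨σ, h1, h2, by simp [hfix]⟩
    · rw [ell, ell, dif_neg (fun h => hm2 h.1), dif_neg (fun h => hm2 h.1)]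
  have hkey : ell r (w + 1) ≤ ell (fun i j => r (τ i) (τ j)) (w + 1) := by
    rcases hmin τ with h | ⟨n0, hn0N, hpre, hlt⟩
    · exact le_of_eq (h (w + 1) hwN)
    · rcases lt_trichotomy n0 (w + 1) with h1 | h1 | h1
      · exact absurd hlt (not_lt.mpr (le_of_eq (hell_eq n0 h1).symm))
      · exact le_of_lt (h1 ▸ hlt)
      · exact le_of_eq (hpre (w + 1) h1)
  have h1 : ell r (w + 1) = (1 / 2) * tourMin r (Sk N (w + 1)) := ell_eq r (by omega) hwN
  have h2 : ell (fun i j => r (τ i) (τ j)) (w + 1)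
      = (1 / 2) * tourMin r ((Sk N (w + 1)).image τ) :=
    ell_eq_general r (by omega) hwN τ τ.injective
  have h3 : (Sk N (w + 1)).image τ = insert b (Sk N w) := by
    ext z
    simp only [Finset.mem_image, Finset.mem_insert, mem_Sk]
    constructor
    · rintro ⟨u, hu, rfl⟩
      by_cases h4 : (u : ℕ) < w
      · right; rw [hτfix u h4]; exact h4
      · have h5 : u = xw := by ext; simp only [hxw]; omega
        left; rw [h5, hτ, Equiv.swap_apply_left]
    · rintro (rfl | hz)
      · exact ⟨xw, by rw [hxw]; exact Nat.lt_succ_self w, Equiv.swap_apply_left _ _⟩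
      · exact ⟨z, by omega, hτfix z hz⟩
  rw [h1] at hkey
  rw [h2, h3] at hkey
  linarith

lemma main (r : Fin N → Fin N → ℝ) (hult : IsUltramat r)
    (hmin : LengthMinimal r) :
    ∀ n, 2 ≤ n → n ≤ N → ∀ k : Fin N, (k : ℕ) + 1 < n →
      ∀ (hA : n - 2 < N) (hB : n - 1 < N), r ⟨n - 2, hA⟩ ⟨n - 1, hB⟩ ≤ r k ⟨n - 1, hB⟩ := by
  intro n
  induction n using Nat.strong_induction_on with
  | _ n IH =>
    intro hn2 hnN k hk hA hB
    classical
    obtain ⟨h0, hsym, hrefl, htri⟩ := hult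
    by_cases hka : (k : ℕ) = n - 2
    · have hke : k = ⟨n - 2, hA⟩ := Fin.ext (by simpa using hka)
      rw [hke]
    · have hklt : (k : ℕ) < n - 2 := by omega
      by_contra hcon
      push_neg at hcon
      set b : Fin N := ⟨n - 1, hB⟩ with hbdef
      set a : Fin N := ⟨n - 2, hA⟩ with hadef
      set t := r a b with htdef
      have hbval : (b : ℕ) = n - 1 := rfl
      have haval : (a : ℕ) = n - 2 := rfl
      have hn3 : 3 ≤ n := by omega
      -- connectedness from the induction hypothesis
      have conn_aux : ∀ (d i u : ℕ), i ≤ u → u + d ≤ n - 2 → ∀ (θ : ℝ)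
          (h1 : i < N) (h2 : u < N) (h3 : u + d < N),
          r ⟨i, h1⟩ ⟨u + d, h3⟩ < θ → r ⟨i, h1⟩ ⟨u, h2⟩ < θ := by
        intro d
        induction d with
        | zero => intro i u hiu hud θ h1 h2 h3 hlt; exact hlt
        | succ d ihd =>
          intro i u hiu hud θ h1 h2 h3 hlt
          have hstep0 := IH (u + d + 2) (by omega) (by omega) (by omega)
            ⟨i, h1⟩ (show i + 1 < u + d + 2 by omega) (by omega) (by omega)
          have hstep : r ⟨u + d, by omega⟩ ⟨u + d + 1, h3⟩ ≤ r ⟨i, h1⟩ ⟨u + d + 1, h3⟩ :=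
            hstep0
          have hprev : r ⟨i, h1⟩ ⟨u + d, by omega⟩ < θ := by
            calc r ⟨i, h1⟩ ⟨u + d, by omega⟩
                ≤ max (r ⟨i, h1⟩ ⟨u + d + 1, h3⟩) (r ⟨u + d + 1, h3⟩ ⟨u + d, by omega⟩) :=
                  htri _ _ _
              _ < θ := by
                  apply max_lt hlt
                  rw [hsym]
                  exact lt_of_le_of_lt hstep hlt
          exact ihd i u hiu (by omega) θ h1 h2 (by omega) hprev
      have conn : ∀ (i u kk : ℕ), i ≤ u → u ≤ kk → kk ≤ n - 2 → ∀ (θ : ℝ)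
          (h1 : i < N) (h2 : u < N) (h3 : kk < N),
          r ⟨i, h1⟩ ⟨kk, h3⟩ < θ → r ⟨i, h1⟩ ⟨u, h2⟩ < θ := by
        intro i u kk hiu hukk hkk θ h1 h2 h3 hlt
        obtain ⟨d, rfl⟩ := Nat.le.dest hukk
        exact conn_aux d i u hiu hkk θ h1 h2 h3 hlt
      -- the nearest point j among the first n-1 points
      have hSne : (Sk N (n - 1)).Nonempty := ⟨⟨0, by omega⟩, mem_Sk.mpr (by simp; omega)⟩
      obtain ⟨j, hjS, hjmin⟩ := Finset.exists_min_image (Sk N (n - 1)) (fun z => r z b) hSne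
      have hkS : k ∈ Sk N (n - 1) := mem_Sk.mpr (by omega)
      have hjb : r j b < t := lt_of_le_of_lt (hjmin k hkS) hcon
      have hja : j ≠ a := fun h => by rw [h] at hjb; exact lt_irrefl _ hjb
      have hjval : (j : ℕ) < n - 2 := by
        have h1 := mem_Sk.mp hjS
        have h2 : (j : ℕ) ≠ n - 2 := fun h => hja (Fin.ext (by simpa using h))
        omega
      -- v : first index in the t-cluster of b
      have hexv : ∃ v : ℕ, ∃ h : v < N, v < n - 1 ∧ r ⟨v, h⟩ b < t :=
        ⟨(j : ℕ), j.isLt, by omega, hjb⟩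
      set v := Nat.find hexv with hvdef
      obtain ⟨hvN, hvn, hvb⟩ := Nat.find_spec hexv
      have hvle : v ≤ (j : ℕ) := Nat.find_le ⟨j.isLt, by omega, hjb⟩
      -- w : first index after v outside the cluster
      have hexw : ∃ u : ℕ, v < u ∧ u < n - 1 ∧ ∃ h : u < N, t ≤ r ⟨u, h⟩ b :=
        ⟨n - 2, by omega, by omega, hA, le_refl _⟩
      set w := Nat.find hexw with hwdef
      obtain ⟨hvw, hwn, hwN', hwb⟩ := Nat.find_spec hexw
      have hwle : w ≤ n - 2 := Nat.find_le ⟨by omega, by omega, hA, le_refl _⟩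
      have hwmin : ∀ u, v < u → u < w → ∀ (h : u < N), r ⟨u, h⟩ b < t := by
        intro u h1 h2 h3
        have hnm := Nat.find_min hexw h2
        by_contra hc
        push_neg at hc
        exact hnm ⟨h1, by omega, h3, hc⟩
      set xw : Fin N := ⟨w, hwN'⟩ with hxwdef
      -- j appears before w
      have hjw : (j : ℕ) < w := by
        by_contra hjw
        push_neg at hjw
        have h1 : r ⟨v, hvN⟩ j < t := by
          calc r ⟨v, hvN⟩ j ≤ max (r ⟨v, hvN⟩ b) (r b j) := htri _ _ _
            _ < t := max_lt hvb (by rw [hsym]; exact hjb)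
        have h2 : r ⟨v, hvN⟩ xw < t :=
          conn v w (j : ℕ) (by omega) hjw (by omega) t hvN hwN' j.isLt h1
        have h3 : r xw b < t := by
          calc r xw b ≤ max (r xw ⟨v, hvN⟩) (r ⟨v, hvN⟩ b) := htri _ _ _
            _ < t := max_lt (by rw [hsym]; exact h2) hvb
        exact absurd hwb (not_le.mpr h3)
      -- every earlier point is t-far from xw
      have hii : ∀ z ∈ Sk N w, t ≤ r z xw := by
        intro z hz
        have hzw : (z : ℕ) < w := mem_Sk.mp hz
        by_cases hzC : r z b < t
        · have h1 := htri xw z b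
          rcases max_cases (r xw z) (r z b) with ⟨hm, -⟩ | ⟨hm, -⟩
          · rw [hm] at h1; rw [hsym]; exact le_trans hwb h1
          · rw [hm] at h1; exfalso; have := le_trans hwb h1; linarith
        · push_neg at hzC
          have hzv : (z : ℕ) < v := by
            rcases lt_trichotomy (z : ℕ) v with h | h | h
            · exact h
            · exfalso
              have hze : z = ⟨v, hvN⟩ := Fin.ext (by simpa using h)
              rw [hze] at hzC
              linarith
            · exfalso
              have := hwmin (z : ℕ) h hzw z.isLt
              have hze : z = ⟨(z : ℕ), z.isLt⟩ := Fin.ext rfl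
              rw [hze] at hzC
              linarith
          by_contra hc
          push_neg at hc
          have h1 : r ⟨(z : ℕ), z.isLt⟩ ⟨v, hvN⟩ < t :=
            conn (z : ℕ) v w (by omega) (by omega) (by omega) t z.isLt hvN hwN' hc
          have h2 : r z b < t := by
            have hze : z = ⟨(z : ℕ), z.isLt⟩ := Fin.ext rfl
            rw [hze]
            calc r ⟨(z : ℕ), z.isLt⟩ b
                ≤ max (r ⟨(z : ℕ), z.isLt⟩ ⟨v, hvN⟩) (r ⟨v, hvN⟩ b) := htri _ _ _
              _ < t := max_lt h1 hvb
          linarith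
      have hbSk : b ∉ Sk N w := by
        intro hmem
        have := mem_Sk.mp hmem
        rw [hbval] at this
        omega
      have hbw : w < (b : ℕ) := by rw [hbval]; omega
      have hgreedy := greedy r hmin (show 1 ≤ w by omega) (show w + 1 ≤ N by omega) hbw
      have hxwS : xw ∉ Sk N w := by
        intro hmem
        have := mem_Sk.mp hmem
        simp [hxwdef] at this
      have hSk1 : Sk N (w + 1) = insert xw (Sk N w) := by
        ext z
        rw [mem_Sk, Finset.mem_insert, mem_Sk]
        constructor
        · intro h
          by_cases h2 : (z : ℕ) < w
          · exact Or.inr h2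
          · exact Or.inl (Fin.ext (by simp [hxwdef]; omega))
        · rintro (rfl | h2)
          · simp [hxwdef]
          · omega
      rw [hSk1] at hgreedy
      rcases eq_or_lt_of_le (show 1 ≤ w by omega) with hw1 | hw2
      · -- w = 1
        have hv0 : v = 0 := by omega
        have hz0N : (0 : ℕ) < N := by omega
        have hSkw : Sk N w = {(⟨0, hz0N⟩ : Fin N)} := by
          ext z
          rw [mem_Sk, Finset.mem_singleton]
          constructor
          · intro h; exact Fin.ext (by simp; omega)
          · rintro rfl; simp; omega
        have h01 : (⟨0, hz0N⟩ : Fin N) ≠ xw := by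
          intro h
          have := congrArg Fin.val h
          simp [hxwdef] at this
          omega
        have hb0 : b ≠ (⟨0, hz0N⟩ : Fin N) := by
          intro h
          have := congrArg Fin.val h
          rw [hbval] at this
          simp at this
          omega
        rw [hSkw] at hgreedy
        have hp1 : tourMin r (insert xw {(⟨0, hz0N⟩ : Fin N)}) = 2 * r xw ⟨0, hz0N⟩ :=
          tourMin_pair r hsym (Ne.symm h01)
        have hp2 : tourMin r (insert b {(⟨0, hz0N⟩ : Fin N)}) = 2 * r b ⟨0, hz0N⟩ :=
          tourMin_pair r hsym hb0
        rw [hp1, hp2] at hgreedy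
        have hge : t ≤ r ⟨0, hz0N⟩ xw := hii _ (mem_Sk.mpr (by simp; omega))
        have h0v : (⟨0, hz0N⟩ : Fin N) = ⟨v, hvN⟩ := Fin.ext (by simp [hv0])
        have hlt2 : r ⟨0, hz0N⟩ b < t := by rw [h0v]; exact hvb
        rw [hsym xw] at hgreedy
        rw [hsym b] at hgreedy
        linarith
      · -- w ≥ 2
        have hcardS : (Sk N w).card = w := Sk_card (by omega)
        have hjSw : j ∈ Sk N w := mem_Sk.mpr hjw
        have hjminS : ∀ z ∈ Sk N w, r j b ≤ r z b := fun z hz =>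
          hjmin z (mem_Sk.mpr (by have := mem_Sk.mp hz; omega))
        by_cases hT : ∀ z ∈ Sk N w, r z b < t
        · -- all earlier points are in the cluster of b
          have hSne' : (Sk N w).Nonempty := ⟨j, hjSw⟩
          obtain ⟨p0, hp0, hmax⟩ := Finset.exists_max_image ((Sk N w) ×ˢ (Sk N w))
            (fun p => r p.1 p.2) (hSne'.product hSne')
          rw [Finset.mem_product] at hp0
          have hTt : (Sk N w).sup' hSne' (fun z => r z b) < t :=
            (Finset.sup'_lt_iff hSne').mpr (fun z hz => hT z hz)
          have hTle : ∀ z ∈ Sk N w, r z b ≤ (Sk N w).sup' hSne' (fun z => r z b) :=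
            fun z hz => Finset.le_sup' (fun z => r z b) hz
          have hLB := LB r ⟨h0, hsym, hrefl, htri⟩ (by omega) hbSk hTle hp0.1 hp0.2
          have hLC := LC r ⟨h0, hsym, hrefl, htri⟩ (Finset.mem_insert_self xw (Sk N w))
            (by rw [Finset.card_insert_of_notMem hxwS]; omega)
            (t := t)
            (fun z hz hzx => by
              rcases Finset.mem_insert.mp hz with h | h
              · exact absurd h hzx
              · rw [hsym]; exact hii z h)
            (D := r p0.1 p0.2)
            (fun z hz z' hz' hzx hz'x => by
              have hzS : z ∈ Sk N w := by
                rcases Finset.mem_insert.mp hz with h | h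
                · exact absurd h hzx
                · exact h
              have hz'S : z' ∈ Sk N w := by
                rcases Finset.mem_insert.mp hz' with h | h
                · exact absurd h hz'x
                · exact h
              exact hmax (z, z') (Finset.mem_product.mpr ⟨hzS, hz'S⟩))
          rw [Finset.erase_insert hxwS] at hLC
          linarith
        · push_neg at hT
          obtain ⟨y, hyS, hyt⟩ := hT
          have hLA := LA r ⟨h0, hsym, hrefl, htri⟩ (by omega) hbSk hjSw hjminS hyS
            (lt_of_lt_of_le hjb hyt)
          have hLCp := LCp r ⟨h0, hsym, hrefl, htri⟩ (Finset.mem_insert_self xw (Sk N w))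
            (by rw [Finset.card_insert_of_notMem hxwS]; omega)
            (t := t)
            (fun z hz hzx => by
              rcases Finset.mem_insert.mp hz with h | h
              · exact absurd h hzx
              · rw [hsym]; exact hii z h)
          rw [Finset.erase_insert hxwS] at hLCp
          linarith

end LMAux

/-- For a positive ultrametric on `{1,…,N}` whose enumeration is length-minimal, the
distance from point `n` to point `n−1` is minimal among the distances from point `n` to
the points `1,…,n−1`: `r(n−1,n) = min_{1 ≤ k ≤ n−1} r(k,n)`. (Point `m` is encoded as
the index `m−1 : Fin N`.) -/
theorem lengthMinimal_dist_pred_isLeast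
    {N : ℕ} (hN : 2 ≤ N) (r : Fin N → Fin N → ℝ)
    (hult : IsUltramat r) (hpos : ∀ i j : Fin N, i ≠ j → 0 < r i j)
    (hmin : LengthMinimal r)
    (n : ℕ) (hn2 : 2 ≤ n) (hnN : n ≤ N) :
    IsLeast { x : ℝ | ∃ k : Fin N, (k : ℕ) + 1 < n ∧ x = r k ⟨n - 1, by omega⟩ }
      (r ⟨n - 2, by omega⟩ ⟨n - 1, by omega⟩) := by
  constructor
  · exact ⟨⟨n - 2, by omega⟩, show n - 2 + 1 < n by omega, rfl⟩
  · rintro x ⟨k, hk, rfl⟩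
    exact LMAux.main r hult hmin n hn2 hnN k hk (by omega) (by omega)
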